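/- Let 0 < R ≤ 2 and let X, Y, Z be points of ℝ^n with |X−Y| ≥ 2, 0 < |X−Z| ≤ R, and 0 < |Y−Z| ≤ R. Then the angle ∠XZY satisfies ∠XZY ≥ θ, where θ ∈ (0,π] is defined by sin(θ/2) = 1/R; equivalently, ⟨X−Z, Y−Z⟩/(|X−Z|·|Y−Z|) ≤ 1 − 2/R². -/

import Mathlib

open Real EuclideanGeometry

lemma key_ineq (a b c R i : ℝ) (ha0 : 0 < a) (haR : a ≤ R) (hb0 : 0 < b)
    (hbR : b ≤ R) (hR0 : 0 < R) (hR2 : R ≤ 2) (hc : 2 ≤ c)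
    (hlaw : c ^ 2 = a ^ 2 - 2 * i + b ^ 2) :
    i / (a * b) ≤ 1 - 2 / R ^ 2 := by
  have hab : (0 : ℝ) < a * b := mul_pos ha0 hb0
  have hR2' : (0 : ℝ) < R ^ 2 := by positivity
  rw [div_le_iff₀ hab]
  have hi : i ≤ (a ^ 2 + b ^ 2 - 4) / 2 := by nlinarith
  have hwlog : a ^ 2 - a * b + b ^ 2 ≤ R ^ 2 := by
    rcases le_total a b with h | h
    · nlinarith
    · nlinarith
  have heq : (1 - 2 / R ^ 2) * (a * b) * R ^ 2 = a * b * R ^ 2 - 2 * (a * b) := by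
    field_simp
  have hd : (a - b) ^ 2 ≤ R ^ 2 - a * b := by nlinarith
  have h2 : R ^ 2 * (a - b) ^ 2 ≤ R ^ 2 * (R ^ 2 - a * b) :=
    mul_le_mul_of_nonneg_left hd hR2'.le
  have h3 : 0 ≤ (4 - R ^ 2) * (R ^ 2 - a * b) := by
    apply mul_nonneg <;> nlinarith
  have h4 : R ^ 2 * i ≤ (1 - 2 / R ^ 2) * (a * b) * R ^ 2 := by
    rw [heq]
    nlinarith [mul_le_mul_of_nonneg_left hi hR2'.le]
  nlinarith

theorem angle_ge_of_dist_le
    (n : ℕ) (R θ : ℝ) (hR0 : 0 < R) (hR2 : R ≤ 2)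
    (hθ0 : 0 < θ) (hθπ : θ ≤ π) (hθ : Real.sin (θ / 2) = 1 / R)
    (X Y Z : EuclideanSpace ℝ (Fin n))
    (hXY : 2 ≤ ‖X - Y‖)
    (hXZ0 : 0 < ‖X - Z‖) (hXZ : ‖X - Z‖ ≤ R)
    (hYZ0 : 0 < ‖Y - Z‖) (hYZ : ‖Y - Z‖ ≤ R) :
    θ ≤ EuclideanGeometry.angle X Z Y ∧
      (inner ℝ (X - Z) (Y - Z) : ℝ) / (‖X - Z‖ * ‖Y - Z‖) ≤ 1 - 2 / R ^ 2 := by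
  have hsub : (X - Z) - (Y - Z) = X - Y := by abel
  have hnorm : ‖X - Y‖ ^ 2 =
      ‖X - Z‖ ^ 2 - 2 * (inner ℝ (X - Z) (Y - Z) : ℝ) + ‖Y - Z‖ ^ 2 := by
    rw [← hsub, @norm_sub_sq_real]
  have key : (inner ℝ (X - Z) (Y - Z) : ℝ) / (‖X - Z‖ * ‖Y - Z‖) ≤ 1 - 2 / R ^ 2 :=
    key_ineq _ _ _ _ _ hXZ0 hXZ hYZ0 hYZ hR0 hR2 hXY hnorm
  refine ⟨?_, key⟩
  have hab : (0 : ℝ) < ‖X - Z‖ * ‖Y - Z‖ := mul_pos hXZ0 hYZ0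
  have hcos : Real.cos θ = 1 - 2 / R ^ 2 := by
    have h2 : Real.cos θ = 1 - 2 * Real.sin (θ / 2) ^ 2 := by
      have h := Real.cos_two_mul (θ / 2)
      have hs := Real.sin_sq_add_cos_sq (θ / 2)
      rw [show 2 * (θ / 2) = θ by ring] at h
      nlinarith
    rw [h2, hθ]
    field_simp
  have hCS : -(‖X - Z‖ * ‖Y - Z‖) ≤ (inner ℝ (X - Z) (Y - Z) : ℝ) := by
    have h1 := abs_real_inner_le_norm (X - Z) (Y - Z)
    have h2 := neg_abs_le (inner ℝ (X - Z) (Y - Z) : ℝ)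
    linarith
  have hlow : (-1 : ℝ) ≤ (inner ℝ (X - Z) (Y - Z) : ℝ) / (‖X - Z‖ * ‖Y - Z‖) := by
    rw [le_div_iff₀ hab]; linarith
  have hangle : EuclideanGeometry.angle X Z Y =
      Real.arccos ((inner ℝ (X - Z) (Y - Z) : ℝ) / (‖X - Z‖ * ‖Y - Z‖)) := by
    rw [EuclideanGeometry.angle, vsub_eq_sub, vsub_eq_sub, InnerProductGeometry.angle]
  rw [hangle]
  calc θ = Real.arccos (Real.cos θ) := (Real.arccos_cos hθ0.le hθπ).symm
    _ ≤ _ := by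
        have hmono := Real.monotone_arcsin (by rw [hcos]; exact key :
          (inner ℝ (X - Z) (Y - Z) : ℝ) / (‖X - Z‖ * ‖Y - Z‖) ≤ Real.cos θ)
        rw [Real.arccos, Real.arccos]
        linarith
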